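/- arXiv:1312.5850 — 3 statements merged into one kernel-verified Lean document; each statement's English description precedes it below -/
import Mathlib

section
/- Let b be a prime, m ≤ n, p ∈ Z_b[x] with deg(p) = n, and q = (q_1,…,q_s) ∈ Z_b[x]^s. The dual net of the higher order polynomial lattice point set P_{b^m,s}(q,p) equals D⊥(q,p) = { k = (k_1,…,k_s) ∈ ℕ₀^s : tr_n(k_1)q_1 + … + tr_n(k_s)q_s ≡ a (mod p) for some polynomial a with deg(a) < n − m }, where tr_n(k)(x) = κ_0 + κ_1 x + … + κ_{n−1} x^{n−1} for k with b-adic digits κ_0, κ_1, …. -/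
open MeasureTheory Finset

noncomputable section

/-- The truncated polynomial `tr_n(k) = κ_0 + κ_1 x + ⋯ + κ_{n-1} x^{n-1}` associated with
the `b`-adic digits `κ_0, κ_1, …` of `k`. -/
def trn (b n k : ℕ) : Polynomial (ZMod b) :=
  ∑ i ∈ Finset.range n, Polynomial.C ((k / b ^ i % b : ℕ) : ZMod b) * Polynomial.X ^ i

/-- The polynomial over `Z_b` whose coefficients are the `b`-adic digits of `k`. -/
def natToPoly (b k : ℕ) : Polynomial (ZMod b) :=
  ∑ i ∈ Finset.range (k + 1), Polynomial.C ((k / b ^ i % b : ℕ) : ZMod b) * Polynomial.X ^ i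

/-- The image of the polynomial `u(x)` in the field of formal Laurent series `Z_b((x⁻¹))`,
realized as the Laurent series `∑ u_i y^{-i}` in the variable `y = x⁻¹`. -/
def polyInv {b : ℕ} (u : Polynomial (ZMod b)) : LaurentSeries (ZMod b) :=
  ∑ i ∈ u.support, HahnSeries.single (-(i : ℤ)) (u.coeff i)

section Aux

variable {b : ℕ}

theorem coeff_sum {α : Type*} (s : Finset α) (f : α → LaurentSeries (ZMod b)) (d : ℤ) :
    (∑ x ∈ s, f x).coeff d = ∑ x ∈ s, (f x).coeff d :=
  map_sum (HahnSeries.coeff.addMonoidHom d) f s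

theorem polyInv_eq_eval₂ (u : Polynomial (ZMod b)) :
    polyInv u = Polynomial.eval₂ (HahnSeries.C : ZMod b →+* LaurentSeries (ZMod b))
      (HahnSeries.single (-1 : ℤ) 1) u := by
  rw [Polynomial.eval₂_eq_sum, Polynomial.sum]
  unfold polyInv
  refine Finset.sum_congr rfl fun i _ => ?_
  rw [HahnSeries.single_pow, one_pow, HahnSeries.C_apply, HahnSeries.single_mul_single,
    zero_add, mul_one]
  congr 1
  simp [nsmul_eq_mul]

theorem polyInv_mul (u v : Polynomial (ZMod b)) :
    polyInv (u * v) = polyInv u * polyInv v := by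
  simp only [polyInv_eq_eval₂, Polynomial.eval₂_mul]

theorem polyInv_add (u v : Polynomial (ZMod b)) :
    polyInv (u + v) = polyInv u + polyInv v := by
  simp only [polyInv_eq_eval₂, Polynomial.eval₂_add]

theorem polyInv_zero : polyInv (0 : Polynomial (ZMod b)) = 0 := by
  simp [polyInv]

theorem polyInv_sum {α : Type*} (s : Finset α) (f : α → Polynomial (ZMod b)) :
    polyInv (∑ x ∈ s, f x) = ∑ x ∈ s, polyInv (f x) := by
  classical
  induction s using Finset.induction with
  | empty => simp [polyInv_zero]
  | insert _ _ hx ih => simp [Finset.sum_insert hx, polyInv_add, ih]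

theorem polyInv_coeff_neg (u : Polynomial (ZMod b)) (i : ℕ) :
    (polyInv u).coeff (-(i : ℤ)) = u.coeff i := by
  classical
  unfold polyInv
  rw [coeff_sum]
  simp only [HahnSeries.coeff_single, neg_inj, Nat.cast_inj]
  rw [Finset.sum_ite_eq u.support i (fun j => u.coeff j)]
  by_cases hi : i ∈ u.support
  · simp [hi]
  · simp only [hi, if_false]
    exact (Polynomial.notMem_support_iff.mp hi).symm

theorem polyInv_coeff_pos (u : Polynomial (ZMod b)) (d : ℤ) (hd : 0 < d) :
    (polyInv u).coeff d = 0 := by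
  unfold polyInv
  rw [coeff_sum]
  refine Finset.sum_eq_zero fun j _ => ?_
  rw [HahnSeries.coeff_single_of_ne]
  omega

theorem polyInv_ne_zero (u : Polynomial (ZMod b)) (hu : u ≠ 0) : polyInv u ≠ 0 := by
  intro h
  have h1 := polyInv_coeff_neg u u.natDegree
  rw [h] at h1
  simp only [HahnSeries.coeff_zero] at h1
  exact Polynomial.leadingCoeff_ne_zero.mpr hu h1.symm

theorem order_polyInv (u : Polynomial (ZMod b)) (hu : u ≠ 0) :
    (polyInv u).order = -(u.natDegree : ℤ) := by
  have h1 : (polyInv u).coeff (-(u.natDegree : ℤ)) ≠ 0 := by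
    rw [polyInv_coeff_neg]
    exact Polynomial.leadingCoeff_ne_zero.mpr hu
  have hvanish : ∀ d : ℤ, d < -(u.natDegree : ℤ) → (polyInv u).coeff d = 0 := by
    intro d hd
    rcases lt_or_ge 0 d with h | h
    · exact polyInv_coeff_pos u d h
    · have hd' : d = -(((-d).toNat : ℕ) : ℤ) := by omega
      rw [hd', polyInv_coeff_neg]
      apply Polynomial.coeff_eq_zero_of_natDegree_lt
      omega
  refine le_antisymm (HahnSeries.order_le_of_coeff_ne_zero h1) ?_
  by_contra hlt
  push_neg at hlt
  exact HahnSeries.coeff_order_eq_zero.not.2 (polyInv_ne_zero u hu) (hvanish _ hlt)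

/-- coefficient extraction through multiplication by a digit polynomial -/
theorem key_coeff (c : ℕ → ZMod b) (N : ℕ) (F : LaurentSeries (ZMod b)) :
    (polyInv (∑ i ∈ Finset.range N, Polynomial.C (c i) * Polynomial.X ^ i) * F).coeff 1
      = ∑ i ∈ Finset.range N, c i * F.coeff ((i : ℤ) + 1) := by
  have h1 : polyInv (∑ i ∈ Finset.range N, Polynomial.C (c i) * Polynomial.X ^ i)
      = ∑ i ∈ Finset.range N, HahnSeries.single (-(i : ℤ)) (c i) := by
    rw [polyInv_eq_eval₂, Polynomial.eval₂_finset_sum]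
    refine Finset.sum_congr rfl fun i _ => ?_
    rw [Polynomial.eval₂_mul, Polynomial.eval₂_C, Polynomial.eval₂_X_pow,
      HahnSeries.single_pow, one_pow, HahnSeries.C_apply, HahnSeries.single_mul_single,
      zero_add, mul_one]
    congr 1
    simp [nsmul_eq_mul]
  rw [h1, Finset.sum_mul, coeff_sum]
  refine Finset.sum_congr rfl fun i _ => ?_
  have h3 : ((i : ℤ) + 1) + (-(i : ℤ)) = 1 := by ring
  conv_lhs => rw [← h3]
  rw [HahnSeries.coeff_single_mul_add]

end Aux

/-- **Lemma (dual net of a higher order polynomial lattice point set).**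
Let `b` be prime, `m ≤ n`, `p ∈ Z_b[x]` with `deg p = n` and `q ∈ Z_b[x]^s`. A vector
`k ∈ ℕ₀^s` lies in the dual net of the higher order polynomial lattice point set
`P_{b^m,s}(q,p)` — whose `h`-th point has `j`-th coordinate with `i`-th digit the
coefficient `t_i^{(j)}` of `x^{-i}` in the Laurent expansion of `h(x)q_j(x)/p(x)` —
iff `tr_n(k_1) q_1 + ⋯ + tr_n(k_s) q_s ≡ a (mod p)` for some `a` with `deg a < n - m`. -/
theorem hoplr_dual_net (b : ℕ) [Fact b.Prime] (s m n : ℕ) (hmn : m ≤ n)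
    (p : Polynomial (ZMod b)) (hp : p.degree = (n : WithBot ℕ))
    (q : Fin s → Polynomial (ZMod b)) (k : Fin s → ℕ) :
    (∀ h : ℕ, h < b ^ m →
        ∑ j, ∑ i : Fin n, ((k j / b ^ (i : ℕ) % b : ℕ) : ZMod b) *
          (polyInv (natToPoly b h * q j) / polyInv p).coeff ((i : ℕ) + 1) = 0)
    ↔ ∃ a : Polynomial (ZMod b), a.degree < ((n - m : ℕ) : WithBot ℕ) ∧
        p ∣ (∑ j, trn b n (k j) * q j - a) := by
  classical
  have hb1 : 1 < b := (Fact.out : b.Prime).one_lt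
  have hp0 : p ≠ 0 := by
    intro h; rw [h, Polynomial.degree_zero] at hp; exact absurd hp (by simp)
  have hPp : polyInv p ≠ 0 := polyInv_ne_zero p hp0
  set v : Polynomial (ZMod b) := ∑ j, trn b n (k j) * q j with hv
  set G : LaurentSeries (ZMod b) := polyInv v / polyInv p with hG
  -- Step A : rewrite the inner double sum
  have stepA : ∀ h : ℕ,
      (∑ j, ∑ i : Fin n, ((k j / b ^ (i : ℕ) % b : ℕ) : ZMod b) *
        (polyInv (natToPoly b h * q j) / polyInv p).coeff ((i : ℕ) + 1))
      = (polyInv (natToPoly b h) * G).coeff 1 := by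
    intro h
    have hjj : ∀ j : Fin s,
        (∑ i : Fin n, ((k j / b ^ (i : ℕ) % b : ℕ) : ZMod b) *
          (polyInv (natToPoly b h * q j) / polyInv p).coeff ((i : ℕ) + 1))
        = (polyInv (trn b n (k j)) * (polyInv (natToPoly b h * q j) / polyInv p)).coeff 1 := by
      intro j
      rw [show trn b n (k j) = ∑ i ∈ Finset.range n,
            Polynomial.C (((k j) / b ^ i % b : ℕ) : ZMod b) * Polynomial.X ^ i from rfl,
        key_coeff]
      rw [Fin.sum_univ_eq_sum_range (fun i =>
        ((k j / b ^ i % b : ℕ) : ZMod b) *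
          (polyInv (natToPoly b h * q j) / polyInv p).coeff ((i : ℤ) + 1)) n]
    calc (∑ j, ∑ i : Fin n, ((k j / b ^ (i : ℕ) % b : ℕ) : ZMod b) *
            (polyInv (natToPoly b h * q j) / polyInv p).coeff ((i : ℕ) + 1))
        = ∑ j, (polyInv (trn b n (k j)) *
            (polyInv (natToPoly b h * q j) / polyInv p)).coeff 1 :=
          Finset.sum_congr rfl fun j _ => hjj j
      _ = (∑ j, polyInv (trn b n (k j)) *
            (polyInv (natToPoly b h * q j) / polyInv p)).coeff 1 := (coeff_sum _ _ _).symm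
      _ = (polyInv (natToPoly b h) * G).coeff 1 := by
          congr 1
          rw [hG, hv, polyInv_sum, div_eq_mul_inv, Finset.sum_mul, Finset.mul_sum]
          refine Finset.sum_congr rfl fun j _ => ?_
          rw [polyInv_mul, polyInv_mul, div_eq_mul_inv]
          ring
  -- Euclidean division of v by p
  set A : Polynomial (ZMod b) := v / p with hA
  set r : Polynomial (ZMod b) := v % p with hr
  have hvr : v = p * A + r := (EuclideanDomain.div_add_mod v p).symm
  have hdr : r.degree < p.degree := EuclideanDomain.mod_lt _ hp0
  set g : LaurentSeries (ZMod b) := polyInv r / polyInv p with hg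
  have hGsplit : ∀ d : ℤ, 0 < d → G.coeff d = g.coeff d := by
    intro d hd
    have hsplit : G = polyInv A + g := by
      rw [hG, hg, hvr, polyInv_add, polyInv_mul]
      field_simp
    rw [hsplit, HahnSeries.coeff_add, polyInv_coeff_pos _ _ hd, zero_add]
  -- Step C' : coefficients of g vanish up to m iff degree r < n - m
  have stepC : (∀ t : ℕ, t < m → g.coeff ((t : ℤ) + 1) = 0)
      ↔ r.degree < ((n - m : ℕ) : WithBot ℕ) := by
    by_cases hr0 : r = 0
    · simp only [hr0, polyInv_zero] at hg ⊢
      rw [hg]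
      constructor
      · intro _
        exact_mod_cast WithBot.bot_lt_coe (n - m)
      · intro _ t _
        simp
    · have hg0 : g ≠ 0 := div_ne_zero (polyInv_ne_zero r hr0) hPp
      have hpn : p.natDegree = n := Polynomial.natDegree_eq_of_degree_eq_some hp
      have horder : g.order = (n : ℤ) - (r.natDegree : ℤ) := by
        have hmulc : g * polyInv p = polyInv r := div_mul_cancel₀ _ hPp
        have h2 := HahnSeries.order_mul hg0 hPp
        rw [hmulc, order_polyInv r hr0, order_polyInv p hp0, hpn] at h2
        omega
      have hen : r.natDegree < n := by
        rw [← hpn]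
        exact Polynomial.natDegree_lt_natDegree hr0 hdr
      constructor
      · intro H
        rw [← Polynomial.natDegree_lt_iff_degree_lt hr0]
        by_contra hge
        push_neg at hge
        have ht : n - r.natDegree - 1 < m := by omega
        have hz := H _ ht
        have hcast : ((n - r.natDegree - 1 : ℕ) : ℤ) + 1 = (n : ℤ) - (r.natDegree : ℤ) := by
          omega
        rw [hcast, ← horder] at hz
        exact HahnSeries.coeff_order_eq_zero.not.2 hg0 hz
      · intro H t ht
        have hlt : r.natDegree < n - m := (Polynomial.natDegree_lt_iff_degree_lt hr0).mpr H
        apply HahnSeries.coeff_eq_zero_of_lt_order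
        rw [horder]
        omega
  -- Step B : reduce "for all h < b^m" to "for all t < m"
  have stepB : (∀ h : ℕ, h < b ^ m → (polyInv (natToPoly b h) * G).coeff 1 = 0)
      ↔ ∀ t : ℕ, t < m → G.coeff ((t : ℤ) + 1) = 0 := by
    constructor
    · intro H t ht
      have hlt : b ^ t < b ^ m := Nat.pow_lt_pow_right hb1 ht
      have := H (b ^ t) hlt
      rw [show natToPoly b (b ^ t) = ∑ i ∈ Finset.range (b ^ t + 1),
            Polynomial.C ((b ^ t / b ^ i % b : ℕ) : ZMod b) * Polynomial.X ^ i from rfl,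
        key_coeff] at this
      have hdig : ∀ i : ℕ, i ∈ Finset.range (b ^ t + 1) → i ≠ t →
          ((b ^ t / b ^ i % b : ℕ) : ZMod b) * G.coeff ((i : ℤ) + 1) = 0 := by
        intro i _ hit
        rcases lt_or_gt_of_ne hit with hlt' | hgt'
        · have h1 : b ^ t / b ^ i = b ^ (t - i) := Nat.pow_div (le_of_lt hlt') (by omega)
          have h2 : b ^ (t - i) % b = 0 := by
            have : b ∣ b ^ (t - i) := dvd_pow_self b (by omega)
            omega
          rw [h1, h2]
          simp
        · have h1 : b ^ t < b ^ i := Nat.pow_lt_pow_right hb1 hgt'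
          rw [Nat.div_eq_of_lt h1]
          simp
      rw [Finset.sum_eq_single t hdig (fun hnot => absurd
          (Finset.mem_range.mpr (by have := Nat.lt_pow_self (n := t) hb1; omega)) hnot)] at this
      rw [Nat.div_self (Nat.pow_pos (by omega : 0 < b) : 0 < b ^ t), Nat.mod_eq_of_lt hb1] at this
      simpa using this
    · intro H h hh
      rw [show natToPoly b h = ∑ i ∈ Finset.range (h + 1),
            Polynomial.C ((h / b ^ i % b : ℕ) : ZMod b) * Polynomial.X ^ i from rfl,
        key_coeff]
      refine Finset.sum_eq_zero fun i _ => ?_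
      rcases lt_or_ge i m with him | him
      · rw [H i him, mul_zero]
      · have : h < b ^ i := lt_of_lt_of_le hh (Nat.pow_le_pow_right (by omega) him)
        rw [Nat.div_eq_of_lt this]
        simp
  -- assemble
  constructor
  · intro H
    refine ⟨r, ?_, ⟨A, by rw [hvr]; ring⟩⟩
    refine stepC.mp fun t ht => ?_
    rw [← hGsplit _ (by positivity)]
    exact (stepB.mp (fun h hh => by rw [← stepA h]; exact H h hh)) t ht
  · rintro ⟨a, ha, c, hc⟩
    have hra : r = a := by
      have h1 : p ∣ r - a := by
        have hvr' : v - r = p * A := by rw [hvr]; ring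
        have hd : p ∣ (v - a) - (v - r) := dvd_sub ⟨c, hc⟩ ⟨A, hvr'⟩
        have he : (v - a) - (v - r) = r - a := by ring
        rwa [he] at hd
      have h2 : (r - a).degree < p.degree := by
        refine lt_of_le_of_lt (Polynomial.degree_sub_le _ _) (max_lt hdr ?_)
        refine lt_of_lt_of_le ha ?_
        rw [hp]
        exact_mod_cast WithBot.coe_le_coe.mpr (by omega : n - m ≤ n)
      have h3 := Polynomial.eq_zero_of_dvd_of_degree_lt h1 h2
      have := sub_eq_zero.mp h3
      exact this
    intro h hh
    rw [stepA h]
    refine (stepB.mpr fun t ht => ?_) h hh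
    rw [hGsplit _ (by positivity)]
    exact stepC.mpr (by rw [hra]; exact ha) t ht
end
end

section
/- Let b ≥ 2 be an integer, x, x' ∈ [0,1]^s and N ∈ ℕ. If x' ∈ I_{N+1}(x), then the set S = { z ∈ [0,1]^s : φ_b(x' ⊕ z) ∉ I_N(φ_b(x ⊕ z)) } has Lebesgue measure 0. -/
open MeasureTheory Finset

noncomputable section

/-- The `i`-th `b`-adic digit `ξ_{i+1}` of `x ∈ [0,1]` (`0`-indexed), with respect to the
unique `b`-adic expansion of `x` in which infinitely many digits differ from `b-1`
whenever `x ≠ 1`, and all digits equal `b-1` when `x = 1`. -/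
def bdigit (b : ℕ) (x : ℝ) (i : ℕ) : ℕ :=
  if x = 1 then b - 1 else (⌊x * (b : ℝ) ^ (i + 1)⌋).toNat % b

/-- Digitwise addition modulo `b` on `[0,1]`. -/
def badd (b : ℕ) (x y : ℝ) : ℝ :=
  ∑' i : ℕ, (((bdigit b x i + bdigit b y i) % b : ℕ) : ℝ) / (b : ℝ) ^ (i + 1)

/-- The `b`-adic tent transformation `φ_b`: the digits of `φ_b(x)` are
`η_i = ξ_{i+1} - ξ_1 (mod b)` where `(ξ_i)` are the digits of `x`. -/
def btent (b : ℕ) (x : ℝ) : ℝ :=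
  ∑' i : ℕ, (((bdigit b x (i + 1) + (b - bdigit b x 0)) % b : ℕ) : ℝ) / (b : ℝ) ^ (i + 1)

/-- The `k`-th `b`-adic Walsh function `wal_k(x) = ω_b^(κ_0 ξ_1 + κ_1 ξ_2 + ⋯)`. -/
def bwal (b k : ℕ) (x : ℝ) : ℂ :=
  Complex.exp (2 * Real.pi * Complex.I / b) ^
    (∑ i ∈ Finset.range k, (k / b ^ i % b) * bdigit b x i)

/-- The unit cube `[0,1]^s`. -/
def cube (s : ℕ) : Set (Fin s → ℝ) := Set.Icc 0 1

/-- Componentwise digitwise addition modulo `b`. -/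
def baddV (b : ℕ) {s : ℕ} (x y : Fin s → ℝ) : Fin s → ℝ := fun j => badd b (x j) (y j)

/-- Componentwise `b`-adic tent transformation on `[0,1]^s`. -/
def btentV (b : ℕ) {s : ℕ} (x : Fin s → ℝ) : Fin s → ℝ := fun j => btent b (x j)

/-- The `k`-th multidimensional `b`-adic Walsh function. -/
def bwalV (b : ℕ) {s : ℕ} (k : Fin s → ℕ) (x : Fin s → ℝ) : ℂ := ∏ j, bwal b (k j) (x j)

namespace TentAux

/-- The real number with digit sequence `d`. -/
def F (b : ℕ) (d : ℕ → ℕ) : ℝ := ∑' i : ℕ, (d i : ℝ) / (b : ℝ) ^ (i + 1)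

variable {b : ℕ}

lemma bdigit_lt (hb : 2 ≤ b) (x : ℝ) (i : ℕ) : bdigit b x i < b := by
  unfold bdigit
  split
  · omega
  · exact Nat.mod_lt _ (by omega)

lemma summable_F (hb : 2 ≤ b) {d : ℕ → ℕ} (hd : ∀ i, d i < b) :
    Summable (fun i : ℕ => (d i : ℝ) / (b : ℝ) ^ (i + 1)) := by
  have hb1 : (1 : ℝ) < b := by exact_mod_cast (by omega : 1 < b)
  refine Summable.of_nonneg_of_le (fun i => by positivity) (fun i => ?_)
    ((summable_geometric_of_lt_one (r := (b:ℝ)⁻¹) (by positivity)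
      ((inv_lt_one_iff₀).2 (Or.inr hb1))).mul_left (b : ℝ))
  rw [inv_pow, ← div_eq_mul_inv]
  have h1 : (d i : ℝ) ≤ (b : ℝ) := by exact_mod_cast (hd i).le
  calc (d i : ℝ) / (b:ℝ) ^ (i + 1) ≤ (b : ℝ) / (b:ℝ) ^ (i + 1) := by gcongr
    _ ≤ (b : ℝ) / (b:ℝ) ^ i := by
        gcongr
        · linarith
        · omega

lemma F_nonneg (d : ℕ → ℕ) : 0 ≤ F b d :=
  tsum_nonneg fun i => by positivity

lemma geom_one (hb : 2 ≤ b) : ∑' i : ℕ, ((b - 1 : ℕ) : ℝ) / (b : ℝ) ^ (i + 1) = 1 := by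
  have hb1 : (1 : ℝ) < b := by exact_mod_cast (by omega : 1 < b)
  have hinv : (b : ℝ)⁻¹ < 1 := (inv_lt_one_iff₀).2 (Or.inr hb1)
  have hcast : ((b - 1 : ℕ) : ℝ) = (b : ℝ) - 1 := by
    push_cast [Nat.cast_sub (by omega : 1 ≤ b)]; ring
  calc ∑' i : ℕ, ((b - 1 : ℕ) : ℝ) / (b : ℝ) ^ (i + 1)
      = ∑' i : ℕ, (((b : ℝ) - 1) * (b:ℝ)⁻¹) * ((b:ℝ)⁻¹) ^ i := by
        congr 1; funext i
        rw [hcast, div_eq_mul_inv, ← inv_pow, pow_succ]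
        ring
    _ = (((b : ℝ) - 1) * (b:ℝ)⁻¹) * ∑' i : ℕ, ((b:ℝ)⁻¹) ^ i := tsum_mul_left
    _ = (((b : ℝ) - 1) * (b:ℝ)⁻¹) * (1 - (b:ℝ)⁻¹)⁻¹ := by
        rw [tsum_geometric_of_lt_one (by positivity) hinv]
    _ = 1 := by
        have hb0 : (b:ℝ) ≠ 0 := by positivity
        have h1 : (1 : ℝ) - (b:ℝ)⁻¹ ≠ 0 := by
          intro h; rw [sub_eq_zero] at h; exact absurd h.symm (ne_of_lt hinv)
        have h2 : (b:ℝ) - 1 ≠ 0 := by linarith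
        field_simp

lemma F_lt_one (hb : 2 ≤ b) {d : ℕ → ℕ} (hd : ∀ i, d i < b) {i0 : ℕ} (h0 : d i0 ≠ b - 1) :
    F b d < 1 := by
  have hs := summable_F hb hd
  have hs' : Summable (fun i : ℕ => ((b - 1 : ℕ) : ℝ) / (b : ℝ) ^ (i + 1)) :=
    summable_F hb (fun _ => by omega)
  have hsub : Summable (fun i : ℕ =>
      ((b - 1 : ℕ) : ℝ) / (b : ℝ) ^ (i + 1) - (d i : ℝ) / (b : ℝ) ^ (i + 1)) := hs'.sub hs
  have hkey : 1 - F b d = ∑' i : ℕ,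
      (((b - 1 : ℕ) : ℝ) / (b : ℝ) ^ (i + 1) - (d i : ℝ) / (b : ℝ) ^ (i + 1)) := by
    rw [Summable.tsum_sub hs' hs, geom_one hb]; rfl
  have hterm : ∀ i, 0 ≤ ((b - 1 : ℕ) : ℝ) / (b : ℝ) ^ (i + 1) - (d i : ℝ) / (b : ℝ) ^ (i + 1) := by
    intro i
    have hdi := hd i
    have h1 : (d i : ℝ) ≤ ((b - 1 : ℕ) : ℝ) := by exact_mod_cast (by omega : d i ≤ b - 1)
    have hp : (0:ℝ) < (b : ℝ) ^ (i + 1) := by positivity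
    rw [← sub_div]
    exact div_nonneg (by linarith) hp.le
  have hpos : 0 < ((b - 1 : ℕ) : ℝ) / (b : ℝ) ^ (i0 + 1) - (d i0 : ℝ) / (b : ℝ) ^ (i0 + 1) := by
    have hdi := hd i0
    have h1 : (d i0 : ℝ) < ((b - 1 : ℕ) : ℝ) := by exact_mod_cast (by omega : d i0 < b - 1)
    have hp : (0:ℝ) < (b : ℝ) ^ (i0 + 1) := by positivity
    rw [← sub_div]
    exact div_pos (by linarith) hp
  have hle := Summable.le_tsum hsub i0 (fun j _ => hterm j)
  rw [← hkey] at hle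
  linarith

lemma floor_F (hb : 2 ≤ b) {d : ℕ → ℕ} (hd : ∀ i, d i < b)
    (hne : ∀ M, ∃ i, M ≤ i ∧ d i ≠ b - 1) (m : ℕ) :
    ⌊F b d * (b : ℝ) ^ (m + 1)⌋ = ((∑ i ∈ range (m + 1), d i * b ^ (m - i) : ℕ) : ℤ) := by
  have hb0 : (0:ℝ) < b := by positivity
  have hbne : (b:ℝ) ≠ 0 := hb0.ne'
  have hsum := summable_F hb hd
  have hsplit : F b d = (∑ i ∈ range (m + 1), (d i : ℝ) / (b:ℝ) ^ (i + 1)) +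
      ∑' i : ℕ, (d (i + (m + 1)) : ℝ) / (b:ℝ) ^ ((i + (m + 1)) + 1) :=
    (Summable.sum_add_tsum_nat_add (m + 1) hsum).symm
  set e : ℕ → ℕ := fun i => d (i + (m + 1)) with he_def
  have he : ∀ i, e i < b := fun i => hd _
  have tail_eq : (∑' i : ℕ, (d (i + (m + 1)) : ℝ) / (b:ℝ) ^ ((i + (m + 1)) + 1)) * (b:ℝ) ^ (m + 1)
      = F b e := by
    rw [← tsum_mul_right]
    unfold F
    congr 1; funext i
    have hpow : (b:ℝ) ^ ((i + (m + 1)) + 1) = (b:ℝ) ^ (i + 1) * (b:ℝ) ^ (m + 1) := by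
      rw [← pow_add]; congr 1; omega
    rw [hpow]
    field_simp
    simp only [he_def]
  have head_eq : (∑ i ∈ range (m + 1), (d i : ℝ) / (b:ℝ) ^ (i + 1)) * (b:ℝ) ^ (m + 1)
      = ((∑ i ∈ range (m + 1), d i * b ^ (m - i) : ℕ) : ℝ) := by
    push_cast
    rw [Finset.sum_mul]
    apply Finset.sum_congr rfl
    intro i hi
    have him : i ≤ m := by
      have := Finset.mem_range.1 hi; omega
    have hpow : (b:ℝ) ^ (m + 1) = (b:ℝ) ^ (i + 1) * (b:ℝ) ^ (m - i) := by
      rw [← pow_add]; congr 1; omega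
    rw [hpow]
    field_simp
  have hFe0 : 0 ≤ F b e := F_nonneg e
  have hFe1 : F b e < 1 := by
    obtain ⟨i, hi, hne'⟩ := hne (m + 1)
    refine F_lt_one hb he (i0 := i - (m + 1)) ?_
    have heq : i - (m + 1) + (m + 1) = i := by omega
    simpa [he_def, heq] using hne'
  have hmain : F b d * (b:ℝ) ^ (m + 1)
      = F b e + ((∑ i ∈ range (m + 1), d i * b ^ (m - i) : ℕ) : ℝ) := by
    rw [hsplit, add_mul, head_eq, tail_eq]; ring
  rw [hmain, Int.floor_add_natCast, Int.floor_eq_zero_iff.2 ⟨hFe0, hFe1⟩, zero_add]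

lemma bdigit_F (hb : 2 ≤ b) {d : ℕ → ℕ} (hd : ∀ i, d i < b)
    (hne : ∀ M, ∃ i, M ≤ i ∧ d i ≠ b - 1) (n : ℕ) :
    bdigit b (F b d) n = d n := by
  have hlt1 : F b d < 1 := by
    obtain ⟨i, _, hi⟩ := hne 0
    exact F_lt_one hb hd hi
  rw [bdigit, if_neg (ne_of_lt hlt1), floor_F hb hd hne n, Int.toNat_natCast]
  have hsplit : (∑ i ∈ range (n + 1), d i * b ^ (n - i) : ℕ)
      = (∑ i ∈ range n, d i * b ^ (n - 1 - i)) * b + d n := by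
    rw [Finset.sum_range_succ, Finset.sum_mul]
    congr 1
    · apply Finset.sum_congr rfl
      intro i hi
      have : i < n := Finset.mem_range.1 hi
      rw [mul_assoc, ← pow_succ]
      congr 2
      omega
    · simp
  rw [hsplit, Nat.add_comm, Nat.add_mul_mod_self_right]
  exact Nat.mod_eq_of_lt (hd n)

lemma F_lt_one_of_ne (hb : 2 ≤ b) {d : ℕ → ℕ} (hd : ∀ i, d i < b)
    (hne : ∀ M, ∃ i, M ≤ i ∧ d i ≠ b - 1) : F b d < 1 := by
  obtain ⟨i, _, hi⟩ := hne 0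
  exact F_lt_one hb hd hi

lemma floor_rec (hb : 2 ≤ b) {z : ℝ} (hz : z ∈ Set.Ico (0:ℝ) 1) (n : ℕ) :
    ⌊z * (b:ℝ) ^ (n + 1)⌋ = b * ⌊z * (b:ℝ) ^ n⌋ + (bdigit b z n : ℤ) := by
  have hz1 : z ≠ 1 := ne_of_lt hz.2
  have hb0 : (0:ℝ) < b := by positivity
  set q := ⌊z * (b:ℝ) ^ (n + 1)⌋ with hq
  set p := ⌊z * (b:ℝ) ^ n⌋ with hp
  have h1 : ((b * p : ℤ) : ℝ) ≤ z * (b:ℝ) ^ (n + 1) := by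
    have hfl := Int.floor_le (z * (b:ℝ) ^ n)
    push_cast
    calc (b:ℝ) * p ≤ (b:ℝ) * (z * (b:ℝ)^n) := mul_le_mul_of_nonneg_left hfl hb0.le
      _ = z * (b:ℝ) ^ (n+1) := by ring
  have h2 : z * (b:ℝ) ^ (n + 1) < ((b * p + b : ℤ) : ℝ) := by
    have hfl := Int.lt_floor_add_one (z * (b:ℝ) ^ n)
    push_cast
    calc z * (b:ℝ) ^ (n+1) = (b:ℝ) * (z * (b:ℝ)^n) := by ring
      _ < (b:ℝ) * (p + 1) := mul_lt_mul_of_pos_left hfl hb0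
      _ = (b:ℝ) * p + b := by ring
  have hq1 : (b : ℤ) * p ≤ q := Int.le_floor.2 h1
  have hq2 : q < b * p + b := Int.floor_lt.2 h2
  have hq0 : 0 ≤ q := Int.floor_nonneg.2 (mul_nonneg hz.1 (by positivity))
  have hdig : (bdigit b z n : ℤ) = q % b := by
    rw [bdigit, if_neg hz1]
    push_cast
    rw [Int.toNat_of_nonneg hq0]
  have hmod : q % b = q - b * p := by
    have h3 : (q - b * p) % b = q - b * p :=
      Int.emod_eq_of_lt (by omega) (by omega)
    calc q % b = (q - b * p + b * p) % b := by congr 1; omega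
      _ = (q - b * p) % b := by rw [Int.add_mul_emod_self_left]
      _ = q - b * p := h3
  omega

lemma countable_A (hb : 2 ≤ b) (M : ℕ) (g : ℕ → ℕ) :
    Set.Countable {z : ℝ | z ∈ Set.Icc (0:ℝ) 1 ∧ ∀ i, M ≤ i → bdigit b z i = g i} := by
  have hb1 : (1 : ℝ) < b := by exact_mod_cast (by omega : 1 < b)
  have hb0 : (0:ℝ) < b := by positivity
  set A' : Set ℝ := {z : ℝ | z ∈ Set.Ico (0:ℝ) 1 ∧ ∀ i, M ≤ i → bdigit b z i = g i} with hA'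
  have hsub : {z : ℝ | z ∈ Set.Icc (0:ℝ) 1 ∧ ∀ i, M ≤ i → bdigit b z i = g i} ⊆ A' ∪ {1} := by
    intro z ⟨⟨hz0, hz1⟩, hzd⟩
    rcases eq_or_lt_of_le hz1 with h | h
    · exact Or.inr (by simp [h])
    · exact Or.inl ⟨⟨hz0, h⟩, hzd⟩
  refine Set.Countable.mono hsub (Set.Countable.union ?_ (Set.countable_singleton 1))
  -- inject A' into ℤ via z ↦ ⌊z * b ^ M⌋
  have hinj : Set.InjOn (fun z : ℝ => ⌊z * (b:ℝ) ^ M⌋) A' := by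
    intro z hz z' hz' hfl
    obtain ⟨hzI, hzd⟩ := hz
    obtain ⟨hzI', hzd'⟩ := hz'
    have key : ∀ n, M ≤ n → ⌊z * (b:ℝ) ^ n⌋ = ⌊z' * (b:ℝ) ^ n⌋ := by
      intro n hn
      induction n, hn using Nat.le_induction with
      | base => exact hfl
      | succ n hn ih =>
          rw [floor_rec hb hzI n, floor_rec hb hzI' n, ih, hzd n hn, hzd' n hn]
    -- conclude z = z'
    by_contra hne
    have habspos : 0 < |z - z'| := abs_pos.2 (sub_ne_zero.2 hne)
    have habs : ∀ n, M ≤ n → |z - z'| < ((b:ℝ) ^ n)⁻¹ := by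
      intro n hn
      have h1 := Int.floor_le (z * (b:ℝ) ^ n)
      have h2 := Int.lt_floor_add_one (z * (b:ℝ) ^ n)
      have h3 := Int.floor_le (z' * (b:ℝ) ^ n)
      have h4 := Int.lt_floor_add_one (z' * (b:ℝ) ^ n)
      rw [key n hn] at h1 h2
      have hpow : (0:ℝ) < (b:ℝ) ^ n := by positivity
      have h5 : |z * (b:ℝ)^n - z' * (b:ℝ)^n| < 1 := by
        rw [abs_sub_lt_iff]
        constructor <;> linarith
      rw [← sub_mul, abs_mul, abs_of_pos hpow] at h5
      rw [inv_eq_one_div, lt_div_iff₀ hpow]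
      exact h5
    obtain ⟨n, hn⟩ := pow_unbounded_of_one_lt (|z - z'|⁻¹) hb1
    have hn' : |z - z'|⁻¹ < (b:ℝ) ^ (max n M) :=
      lt_of_lt_of_le hn (pow_le_pow_right₀ hb1.le (le_max_left n M))
    have hcon := habs (max n M) (le_max_right n M)
    have : ((b:ℝ) ^ (max n M))⁻¹ < |z - z'| := inv_lt_of_inv_lt₀ habspos hn'
    linarith
  exact Set.countable_of_injective_of_countable_image hinj (Set.to_countable _)


lemma natCast_inj_of_lt (hb : 2 ≤ b) {u v : ℕ} (hu : u < b) (hv : v < b)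
    (h : (u : ZMod b) = v) : u = v := by
  haveI : NeZero b := ⟨by omega⟩
  have h2 := congrArg ZMod.val h
  rwa [ZMod.val_cast_of_lt hu, ZMod.val_cast_of_lt hv] at h2

lemma cast_sub_eq_neg (hb : 2 ≤ b) {k : ℕ} (hk : k ≤ b) :
    ((b - k : ℕ) : ZMod b) = - (k : ZMod b) := by
  haveI : NeZero b := ⟨by omega⟩
  have h : ((b - k : ℕ) : ZMod b) + (k : ZMod b) = ((b : ℕ) : ZMod b) := by
    rw [← Nat.cast_add]; congr 1; omega
  rw [ZMod.natCast_self] at h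
  exact eq_neg_of_add_eq_zero_left h

lemma add_mod_eq_imp (hb : 2 ≤ b) {a t c : ℕ} (ha : a < b) (ht : t < b) (hc : c < b)
    (h : (a + t) % b = c) : t = (c + (b - a)) % b := by
  haveI : NeZero b := ⟨by omega⟩
  apply natCast_inj_of_lt hb ht (Nat.mod_lt _ (by omega))
  have h1 : (((a + t) % b : ℕ) : ZMod b) = (c : ZMod b) := by rw [h]
  rw [ZMod.natCast_mod, Nat.cast_add] at h1
  rw [ZMod.natCast_mod, Nat.cast_add, cast_sub_eq_neg hb ha.le]
  linear_combination h1

lemma shift_mod_eq_imp (hb : 2 ≤ b) {t k c : ℕ} (ht : t < b) (hk : k < b) (hc : c < b)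
    (h : (t + (b - k)) % b = c) : t = (c + k) % b := by
  haveI : NeZero b := ⟨by omega⟩
  apply natCast_inj_of_lt hb ht (Nat.mod_lt _ (by omega))
  have h1 : (((t + (b - k)) % b : ℕ) : ZMod b) = (c : ZMod b) := by rw [h]
  rw [ZMod.natCast_mod, Nat.cast_add, cast_sub_eq_neg hb hk.le] at h1
  rw [ZMod.natCast_mod, Nat.cast_add]
  linear_combination h1

lemma tent_digit (hb : 2 ≤ b) (x z : ℝ)
    (hgood : ∀ c, c < b → ∀ M, ∃ i, M ≤ i ∧ (bdigit b x i + bdigit b z i) % b ≠ c) (n : ℕ) :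
    bdigit b (btent b (badd b x z)) n
      = ((bdigit b x (n + 1) + bdigit b z (n + 1)) % b
          + (b - (bdigit b x 0 + bdigit b z 0) % b)) % b := by
  set e : ℕ → ℕ := fun i => (bdigit b x i + bdigit b z i) % b with he_def
  have he : ∀ i, e i < b := fun i => Nat.mod_lt _ (by omega)
  have hne : ∀ M, ∃ i, M ≤ i ∧ e i ≠ b - 1 := fun M => by
    obtain ⟨i, hi, h⟩ := hgood (b - 1) (by omega) M
    exact ⟨i, hi, h⟩
  have hadd : badd b x z = F b e := rfl
  have hd : ∀ i, bdigit b (badd b x z) i = e i := by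
    intro i; rw [hadd]; exact bdigit_F hb he hne i
  set f : ℕ → ℕ := fun i => (e (i + 1) + (b - e 0)) % b with hf_def
  have htent : btent b (badd b x z) = F b f := by
    unfold btent F
    congr 1; funext i
    rw [hd, hd]
  have hf : ∀ i, f i < b := fun i => Nat.mod_lt _ (by omega)
  have hfne : ∀ M, ∃ i, M ≤ i ∧ f i ≠ b - 1 := by
    intro M
    obtain ⟨i, hi, hne'⟩ := hgood ((b - 1 + e 0) % b) (Nat.mod_lt _ (by omega)) (M + 1)
    refine ⟨i - 1, by omega, ?_⟩
    have heq : i - 1 + 1 = i := by omega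
    simp only [hf_def, heq]
    intro hcon
    exact hne' (shift_mod_eq_imp hb (he i) (he 0) (by omega) hcon)
  rw [htent, bdigit_F hb hf hfne n]

lemma null_cyl {s : ℕ} (j : Fin s) (A : Set ℝ) (hA : A.Countable) :
    volume {z : Fin s → ℝ | z j ∈ A} = 0 := by
  classical
  have heq : {z : Fin s → ℝ | z j ∈ A}
      = Set.pi Set.univ (fun j' => if j' = j then A else Set.univ) := by
    ext z
    simp only [Set.mem_setOf_eq, Set.mem_pi, Set.mem_univ, forall_true_left]
    constructor
    · intro h j'
      by_cases hj : j' = j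
      · subst hj; simp [h]
      · simp [hj]
    · intro h
      have h2 := h j
      simpa using h2
  rw [heq, volume_pi_pi]
  apply Finset.prod_eq_zero (Finset.mem_univ j)
  simp [hA.measure_zero volume]

end TentAux

/-- **Lemma (folding and shifting almost surely preserves closeness).**
Let `b ≥ 2`, `x, x' ∈ [0,1]^s` and `N ∈ ℕ`. If `x' ∈ I_{N+1}(x)` (the first `N+1` `b`-adic
digits of each coordinate agree), then the set
`S = {z ∈ [0,1]^s : φ_b(x' ⊕ z) ∉ I_N(φ_b(x ⊕ z))}` has Lebesgue measure `0`. -/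
theorem tent_shift_measure_zero (b : ℕ) (hb : 2 ≤ b) (s N : ℕ)
    (x x' : Fin s → ℝ) (hx : x ∈ cube s) (hx' : x' ∈ cube s)
    (hI : ∀ j, ∀ i < N + 1, bdigit b (x' j) i = bdigit b (x j) i) :
    volume {z : Fin s → ℝ | z ∈ cube s ∧ ∃ j, ∃ i < N,
        bdigit b (btent b (badd b (x' j) (z j))) i
          ≠ bdigit b (btent b (badd b (x j) (z j))) i} = 0 := by
  classical
  apply measure_mono_null
    (t := ⋃ (j : Fin s) (w : Bool) (c : Fin b) (M : ℕ),
      {z : Fin s → ℝ | z j ∈ {r : ℝ | r ∈ Set.Icc (0:ℝ) 1 ∧ ∀ i, M ≤ i →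
        bdigit b r i = ((c : ℕ) + (b - bdigit b ((if w then x else x') j) i)) % b}})
  · intro z hz
    obtain ⟨hzc, j, i, hiN, hne⟩ := hz
    by_contra hz'
    simp only [Set.mem_iUnion, not_exists] at hz'
    have hzj : z j ∈ Set.Icc (0:ℝ) 1 := ⟨hzc.1 j, hzc.2 j⟩
    have good : ∀ (w : Bool) (c : ℕ), c < b → ∀ M, ∃ i', M ≤ i' ∧
        (bdigit b ((if w then x else x') j) i' + bdigit b (z j) i') % b ≠ c := by
      intro w c hc M
      have h1 := hz' j w ⟨c, hc⟩ M
      simp only [Set.mem_setOf_eq] at h1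
      push_neg at h1
      obtain ⟨i', hi', hne'⟩ := h1 hzj
      refine ⟨i', hi', ?_⟩
      intro hcon
      exact hne' (TentAux.add_mod_eq_imp hb (TentAux.bdigit_lt hb _ _)
        (TentAux.bdigit_lt hb _ _) hc hcon)
    have goodx : ∀ c, c < b → ∀ M, ∃ i', M ≤ i' ∧
        (bdigit b (x j) i' + bdigit b (z j) i') % b ≠ c := by
      simpa using good true
    have goodx' : ∀ c, c < b → ∀ M, ∃ i', M ≤ i' ∧
        (bdigit b (x' j) i' + bdigit b (z j) i') % b ≠ c := by
      simpa using good false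
    apply hne
    rw [TentAux.tent_digit hb (x' j) (z j) goodx' i,
      TentAux.tent_digit hb (x j) (z j) goodx i,
      hI j (i + 1) (by omega), hI j 0 (by omega)]
  · exact measure_iUnion_null fun j => measure_iUnion_null fun w =>
      measure_iUnion_null fun c => measure_iUnion_null fun M =>
        TentAux.null_cyl j _ (TentAux.countable_A hb M _)
end
end

section
/- Let b ≥ 2 be an integer, N ∈ ℕ, and x, x' ∈ [0,1] with v(x, x') ≥ N + 1. Then the set T = { z ∈ [0,1] : v(φ_b(x ⊕ z), φ_b(x' ⊕ z)) < N } is countable. -/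
open MeasureTheory Finset

noncomputable section

namespace TA
variable {b : ℕ}

lemma bdigit_lt (hb : 2 ≤ b) (x : ℝ) (i : ℕ) : bdigit b x i < b := by
  unfold bdigit; split
  · omega
  · exact Nat.mod_lt _ (by omega)

lemma bdigit_nonneg_eq (x : ℝ) (hx : x ≠ 1) (i : ℕ) (h0 : 0 ≤ x) :
    bdigit b x i = ⌊x * (b : ℝ) ^ (i + 1)⌋₊ % b := by
  unfold bdigit; rw [if_neg hx, Int.floor_toNat]

lemma summable_digits (hb : 2 ≤ b) {d : ℕ → ℕ} (hd : ∀ i, d i < b) :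
    Summable (fun i => (d i : ℝ) / (b : ℝ) ^ (i + 1)) := by
  have hb0 : (0:ℝ) < b := by positivity
  have hr0 : (0:ℝ) ≤ 1 / b := by positivity
  have hr1 : (1:ℝ) / b < 1 := by
    rw [div_lt_one hb0]; exact_mod_cast by omega
  apply Summable.of_nonneg_of_le (fun i => by positivity) (fun i => ?_)
    (summable_geometric_of_lt_one hr0 hr1)
  rw [div_pow, one_pow, div_le_div_iff₀ (by positivity) (by positivity), one_mul,
    pow_succ]
  have : (d i : ℝ) ≤ b := by exact_mod_cast (hd i).le
  calc (d i : ℝ) * (b:ℝ)^i ≤ b * b ^ i := by nlinarith [pow_pos hb0 i]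
    _ = (b:ℝ)^i * b := by ring

lemma geom_finite (hb : 2 ≤ b) (n : ℕ) :
    ∑ i ∈ range n, ((b:ℝ) - 1) / (b:ℝ) ^ (i+1) = 1 - 1 / (b:ℝ)^n := by
  have hb0 : (0:ℝ) < b := by positivity
  induction n with
  | zero => simp
  | succ n ih =>
      rw [Finset.sum_range_succ, ih]
      have h1 : (b:ℝ)^n ≠ 0 := by positivity
      have h2 : (b:ℝ)^(n+1) ≠ 0 := by positivity
      field_simp
      ring

lemma tail_le_one (hb : 2 ≤ b) {d : ℕ → ℕ} (hd : ∀ i, d i < b) :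
    ∑' i, (d i : ℝ) / (b : ℝ) ^ (i + 1) ≤ 1 := by
  have hb0 : (0:ℝ) < b := by positivity
  have hg : Summable (fun i : ℕ => ((b:ℝ) - 1) / (b:ℝ)^(i+1)) := by
    have := summable_digits hb (d := fun _ => b - 1) (fun i => by show b - 1 < b; omega)
    convert this using 2 with i
    congr 1
    rw [Nat.cast_sub (by omega : 1 ≤ b), Nat.cast_one]
  have h1 : ∑' i, (d i : ℝ) / (b : ℝ) ^ (i + 1)
      ≤ ∑' i, ((b:ℝ) - 1) / (b:ℝ)^(i+1) := by
    apply Summable.tsum_le_tsum _ (summable_digits hb hd) hg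
    intro i
    apply div_le_div_of_nonneg_right ?_ (by positivity)
    have h : (d i : ℝ) + 1 ≤ b := by exact_mod_cast hd i
    linarith
  have h2 : ∑' i : ℕ, ((b:ℝ) - 1) / (b:ℝ)^(i+1) = 1 := by
    have := hg.hasSum.tendsto_sum_nat
    have hlim : Filter.Tendsto (fun n => ∑ i ∈ range n, ((b:ℝ) - 1) / (b:ℝ)^(i+1))
        Filter.atTop (nhds 1) := by
      have heq : (fun n => ∑ i ∈ range n, ((b:ℝ) - 1) / (b:ℝ)^(i+1))
          = fun n => 1 - 1 / (b:ℝ)^n := funext fun n => geom_finite hb n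
      rw [heq]
      have : Filter.Tendsto (fun n : ℕ => 1 / (b:ℝ)^n) Filter.atTop (nhds 0) := by
        have heq2 : (fun n : ℕ => 1 / (b:ℝ)^n) = fun n : ℕ => ((b:ℝ)⁻¹)^n :=
          funext fun n => by rw [inv_pow, one_div]
        rw [heq2]
        apply tendsto_pow_atTop_nhds_zero_of_lt_one (by positivity)
        rw [inv_lt_one_iff₀]; right; exact_mod_cast by omega
      have := Filter.Tendsto.const_sub (1:ℝ) this
      simpa using this
    exact tendsto_nhds_unique this hlim
  linarith

lemma tsum_nonneg' {d : ℕ → ℕ} : 0 ≤ ∑' i, (d i : ℝ) / (b : ℝ) ^ (i + 1) :=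
  tsum_nonneg fun i => by positivity

lemma tail_shift (hb : 2 ≤ b) {d : ℕ → ℕ} (hd : ∀ i, d i < b) (n : ℕ) :
    ∑' i, (d (i + n) : ℝ) / (b : ℝ) ^ (i + n + 1)
      = (1 / (b:ℝ)^n) * ∑' i, (d (i + n) : ℝ) / (b : ℝ) ^ (i + 1) := by
  rw [← tsum_mul_left]
  apply tsum_congr
  intro i
  have hb0 : (0:ℝ) < b := by positivity
  rw [div_mul_div_comm, one_mul]
  congr 1
  rw [← pow_add]
  congr 1
  omega

lemma tail_lt_one (hb : 2 ≤ b) {d : ℕ → ℕ} (hd : ∀ i, d i < b) (m : ℕ)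
    (hm : d m ≠ b - 1) :
    ∑' i, (d i : ℝ) / (b : ℝ) ^ (i + 1) ≤ 1 - 1 / (b:ℝ)^(m+1) := by
  have hb0 : (0:ℝ) < b := by positivity
  have hsum := summable_digits hb hd
  rw [← hsum.sum_add_tsum_nat_add (m+1)]
  have htail : ∑' i, (d (i + (m+1)) : ℝ) / (b : ℝ) ^ (i + (m+1) + 1)
      ≤ 1 / (b:ℝ)^(m+1) := by
    rw [tail_shift hb hd (m+1)]
    have h1 : ∑' i, (d (i + (m+1)) : ℝ) / (b : ℝ) ^ (i + 1) ≤ 1 :=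
      tail_le_one hb (fun i => hd _)
    have h2 : (0:ℝ) ≤ 1 / (b:ℝ)^(m+1) := by positivity
    nlinarith [tsum_nonneg' (b := b) (d := fun i => d (i + (m+1)))]
  have hhead : ∑ i ∈ range (m+1), (d i : ℝ) / (b : ℝ) ^ (i + 1)
      ≤ 1 - 1/(b:ℝ)^m - 1/(b:ℝ)^(m+1) + (((b:ℝ) - 1) / (b:ℝ)^(m+1) - 1/(b:ℝ)^(m+1)) + 1/(b:ℝ)^(m+1) := by
    rw [Finset.sum_range_succ]
    have hA : ∑ i ∈ range m, (d i : ℝ) / (b : ℝ) ^ (i + 1)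
        ≤ 1 - 1/(b:ℝ)^m := by
      rw [← geom_finite hb m]
      apply Finset.sum_le_sum
      intro i _
      apply div_le_div_of_nonneg_right ?_ (by positivity)
      have h : (d i : ℝ) + 1 ≤ b := by exact_mod_cast hd i
      linarith
    have hB : (d m : ℝ) / (b:ℝ)^(m+1) ≤ ((b:ℝ) - 1)/(b:ℝ)^(m+1) - 1/(b:ℝ)^(m+1) := by
      have hdm : d m + 2 ≤ b := by have := hd m; omega
      have : (d m : ℝ) + 2 ≤ b := by exact_mod_cast hdm
      rw [div_sub_div_same, div_le_div_iff_of_pos_right (by positivity)]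
      linarith
    linarith
  have key : ((b:ℝ) - 1)/(b:ℝ)^(m+1) = 1/(b:ℝ)^m - 1/(b:ℝ)^(m+1) := by
    have h1 : (b:ℝ)^m ≠ 0 := by positivity
    have h2 : (b:ℝ)^(m+1) ≠ 0 := by positivity
    field_simp
    ring
  rw [key] at hhead
  linarith

/-- Extraction of digits from a valid expansion. -/
lemma bdigit_val (hb : 2 ≤ b) {d : ℕ → ℕ} (hd : ∀ i, d i < b)
    (hne : ∀ n, ∃ m, n ≤ m ∧ d m ≠ b - 1) (i : ℕ) :
    bdigit b (∑' j, (d j : ℝ) / (b : ℝ) ^ (j + 1)) i = d i := by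
  have hb0 : (0:ℝ) < b := by positivity
  set s := ∑' j, (d j : ℝ) / (b : ℝ) ^ (j + 1) with hs
  have hsum := summable_digits hb hd
  have hs0 : 0 ≤ s := tsum_nonneg'
  have hslt : s < 1 := by
    obtain ⟨m, _, hm⟩ := hne 0
    have := tail_lt_one hb hd m hm
    have : (0:ℝ) < 1/(b:ℝ)^(m+1) := by positivity
    linarith [tail_lt_one hb hd m hm]
  have hs1 : s ≠ 1 := ne_of_lt hslt
  -- the tail r
  set r := ∑' k, (d (k + (i+1)) : ℝ) / (b : ℝ) ^ (k + 1) with hr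
  have hr0 : 0 ≤ r := tsum_nonneg'
  have hr1 : r < 1 := by
    obtain ⟨m, hm1, hm2⟩ := hne (i+1)
    have := tail_lt_one hb (d := fun k => d (k + (i+1))) (fun k => hd _)
      (m - (i+1)) (by show d (m - (i+1) + (i+1)) ≠ b - 1
                      rw [show m - (i+1) + (i+1) = m from by omega]; exact hm2)
    have hp : (0:ℝ) < 1/(b:ℝ)^(m - (i+1) + 1) := by positivity
    linarith
  -- s * b^(i+1) = K + r
  set K : ℕ := ∑ j ∈ range (i+1), d j * b ^ (i - j) with hK
  have hmul : s * (b:ℝ)^(i+1) = (K : ℝ) + r := by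
    rw [hs, ← hsum.sum_add_tsum_nat_add (i+1), add_mul]
    congr 1
    · rw [Finset.sum_mul]
      push_cast [hK]
      apply Finset.sum_congr rfl
      intro j hj
      rw [Finset.mem_range] at hj
      rw [div_mul_eq_mul_div, mul_div_assoc]
      congr 1
      rw [div_eq_iff (by positivity : ((b:ℝ)^(j+1)) ≠ 0), ← pow_add]
      congr 1
      omega
    · rw [tail_shift hb hd (i+1), ← hr]
      rw [mul_comm, ← mul_assoc]
      have : (b:ℝ)^(i+1) * (1/(b:ℝ)^(i+1)) = 1 := by field_simp
      rw [this, one_mul]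
  -- floor
  have hfloor : ⌊s * (b:ℝ)^(i+1)⌋₊ = K := by
    rw [hmul]
    rw [Nat.floor_eq_iff (by positivity)]
    constructor
    · push_cast; linarith
    · push_cast; linarith
  rw [bdigit_nonneg_eq s hs1 i hs0, hfloor]
  -- K % b = d i
  have hKmod : K % b = d i := by
    rw [hK, Finset.sum_range_succ, Nat.sub_self, pow_zero, mul_one]
    have hdvd : b ∣ ∑ j ∈ range i, d j * b ^ (i - j) :=
      Finset.dvd_sum fun j hj => by
        rw [Finset.mem_range] at hj
        exact Dvd.dvd.mul_left (dvd_pow_self b (by omega : i - j ≠ 0)) _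
    obtain ⟨q, hq⟩ := hdvd
    rw [hq, Nat.mul_add_mod, Nat.mod_eq_of_lt (hd i)]
  rw [hKmod]

lemma partial_sum_eq (hb : 2 ≤ b) {z : ℝ} (h0 : 0 ≤ z) (h1 : z < 1) (n : ℕ) :
    ∑ j ∈ range n, (bdigit b z j : ℝ) / (b : ℝ) ^ (j + 1)
      = (⌊z * (b:ℝ)^n⌋₊ : ℝ) / (b:ℝ)^n := by
  have hb0 : (0:ℝ) < b := by positivity
  have hz1 : z ≠ 1 := ne_of_lt h1
  induction n with
  | zero => simp [Nat.floor_eq_zero.2 (by simpa using h1)]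
  | succ n ih =>
      rw [Finset.sum_range_succ, ih]
      set m : ℕ := ⌊z * (b:ℝ)^(n+1)⌋₊ with hm
      have hdig : bdigit b z n = m % b := bdigit_nonneg_eq z hz1 n h0
      have hquot : ⌊z * (b:ℝ)^n⌋₊ = m / b := by
        rw [hm, ← Nat.floor_div_natCast]
        congr 1
        rw [pow_succ, ← mul_assoc, mul_div_assoc, div_self (ne_of_gt hb0), mul_one]
      rw [hquot, hdig]
      have hsplit : (m : ℝ) = b * (m / b : ℕ) + (m % b : ℕ) := by
        exact_mod_cast (Nat.div_add_mod m b).symm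
      have h2 : (b:ℝ)^n ≠ 0 := by positivity
      have h3 : (b:ℝ)^(n+1) ≠ 0 := by positivity
      rw [hsplit, pow_succ]
      field_simp

lemma self_expansion (hb : 2 ≤ b) {z : ℝ} (h0 : 0 ≤ z) (h1 : z < 1) :
    ∑' i, (bdigit b z i : ℝ) / (b : ℝ) ^ (i + 1) = z := by
  have hb0 : (0:ℝ) < b := by positivity
  have hb1 : (1:ℝ) < b := by exact_mod_cast by omega
  have hsum := summable_digits hb (bdigit_lt hb z)
  have h2 := hsum.hasSum.tendsto_sum_nat
  have hlim : Filter.Tendsto (fun n => ∑ j ∈ range n, (bdigit b z j : ℝ) / (b : ℝ) ^ (j + 1))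
      Filter.atTop (nhds z) := by
    rw [tendsto_iff_dist_tendsto_zero]
    apply squeeze_zero (fun n => dist_nonneg) (g := fun n => ((b:ℝ)⁻¹)^n)
    · intro n
      rw [partial_sum_eq hb h0 h1 n, Real.dist_eq, abs_le]
      have hfl := Nat.floor_le (by positivity : 0 ≤ z * (b:ℝ)^n)
      have hfl2 := Nat.lt_floor_add_one (z * (b:ℝ)^n)
      have hpn : (0:ℝ) < (b:ℝ)^n := by positivity
      have hone : ((b:ℝ)⁻¹)^n * (b:ℝ)^n = 1 := by
        rw [inv_pow, inv_mul_cancel₀ (ne_of_gt hpn)]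
      have h4 : (⌊z * (b:ℝ)^n⌋₊ : ℝ)/(b:ℝ)^n ≤ z := by
        rw [div_le_iff₀ hpn]; exact hfl
      have h5 : z - ((b:ℝ)⁻¹)^n ≤ (⌊z * (b:ℝ)^n⌋₊ : ℝ)/(b:ℝ)^n := by
        rw [le_div_iff₀ hpn]
        nlinarith [hfl2, hone]
      have h6 : (0:ℝ) ≤ ((b:ℝ)⁻¹)^n := by positivity
      constructor
      · linarith
      · linarith
    · exact tendsto_pow_atTop_nhds_zero_of_lt_one (by positivity)
        (by rw [inv_lt_one_iff₀]; right; exact hb1)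
  exact tendsto_nhds_unique h2 hlim

lemma digit_inj (hb : 2 ≤ b) {z w : ℝ} (hz : z ∈ Set.Ico (0:ℝ) 1) (hw : w ∈ Set.Ico (0:ℝ) 1)
    (h : ∀ i, bdigit b z i = bdigit b w i) : z = w := by
  rw [← self_expansion hb hz.1 hz.2, ← self_expansion hb hw.1 hw.2]
  exact tsum_congr fun i => by rw [h i]

/-- Sets of reals in `[0,1]` all of whose digits are determined by the first `M` are countable. -/
lemma countable_of_tail_determined (hb : 2 ≤ b) (M : ℕ) {S : Set ℝ}
    (hS : S ⊆ Set.Icc 0 1)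
    (h : ∀ z ∈ S, ∀ w ∈ S, (∀ j < M, bdigit b z j = bdigit b w j) →
      ∀ j, bdigit b z j = bdigit b w j) : S.Countable := by
  have hsub : S ⊆ (S \ {1}) ∪ {1} := by
    intro z hz
    by_cases h1 : z = 1
    · exact Or.inr h1
    · exact Or.inl ⟨hz, h1⟩
  apply Set.Countable.mono hsub
  apply Set.Countable.union ?_ (Set.countable_singleton 1)
  rw [← Set.countable_coe_iff]
  have : ∀ z : ↥(S \ {1}), (z : ℝ) ∈ Set.Ico (0:ℝ) 1 := by
    rintro ⟨z, hz, hz1⟩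
    have := hS hz
    exact ⟨this.1, lt_of_le_of_ne this.2 hz1⟩
  apply Function.Injective.countable
    (f := fun z : ↥(S \ {1}) => (fun j : Fin M => bdigit b (z : ℝ) j))
  rintro ⟨z, hz, hz1⟩ ⟨w, hw, hw1⟩ heq
  apply Subtype.ext
  apply digit_inj hb (this ⟨z, hz, hz1⟩) (this ⟨w, hw, hw1⟩)
  apply h z hz w hw
  intro j hj
  exact congrFun heq ⟨j, hj⟩

lemma mod_cancel_left (hb : 2 ≤ b) {c u v : ℕ} (hu : u < b) (hv : v < b)
    (h : (c + u) % b = (c + v) % b) : u = v := by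
  have := (Nat.ModEq.add_left_cancel' c (h : (c + u) ≡ (c + v) [MOD b]))
  rwa [Nat.ModEq, Nat.mod_eq_of_lt hu, Nat.mod_eq_of_lt hv] at this

lemma mod_cancel_right (hb : 2 ≤ b) {c u v : ℕ} (hu : u < b) (hv : v < b)
    (h : (u + c) % b = (v + c) % b) : u = v := by
  apply mod_cancel_left hb hu hv
  rwa [Nat.add_comm c u, Nat.add_comm c v]

/-- Countability of the set where the digitwise sum with a fixed `x` is eventually `b-1`. -/
lemma countA (hb : 2 ≤ b) (x : ℝ) :
    Set.Countable {z : ℝ | z ∈ Set.Icc (0:ℝ) 1 ∧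
      ∃ M, ∀ i, M ≤ i → (bdigit b x i + bdigit b z i) % b = b - 1} := by
  have : {z : ℝ | z ∈ Set.Icc (0:ℝ) 1 ∧
      ∃ M, ∀ i, M ≤ i → (bdigit b x i + bdigit b z i) % b = b - 1}
      ⊆ ⋃ M : ℕ, {z : ℝ | z ∈ Set.Icc (0:ℝ) 1 ∧
        ∀ i, M ≤ i → (bdigit b x i + bdigit b z i) % b = b - 1} := by
    rintro z ⟨hz, M, hM⟩
    exact Set.mem_iUnion.2 ⟨M, hz, hM⟩
  apply Set.Countable.mono this
  apply Set.countable_iUnion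
  intro M
  apply countable_of_tail_determined hb M (fun z hz => hz.1)
  rintro z ⟨hzI, hz⟩ w ⟨hwI, hw⟩ hjM j
  by_cases hj : j < M
  · exact hjM j hj
  · push_neg at hj
    exact mod_cancel_left hb (bdigit_lt hb z j) (bdigit_lt hb w j)
      ((hz j hj).trans (hw j hj).symm)

/-- Countability of the set where the tent digits of `x ⊕ z` are eventually `b-1`. -/
lemma countT (hb : 2 ≤ b) (x : ℝ) :
    Set.Countable {z : ℝ | z ∈ Set.Icc (0:ℝ) 1 ∧
      ∃ M, ∀ i, M ≤ i →
        ((bdigit b x (i+1) + bdigit b z (i+1)) % b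
          + (b - (bdigit b x 0 + bdigit b z 0) % b)) % b = b - 1} := by
  have : {z : ℝ | z ∈ Set.Icc (0:ℝ) 1 ∧
      ∃ M, ∀ i, M ≤ i →
        ((bdigit b x (i+1) + bdigit b z (i+1)) % b
          + (b - (bdigit b x 0 + bdigit b z 0) % b)) % b = b - 1}
      ⊆ ⋃ M : ℕ, {z : ℝ | z ∈ Set.Icc (0:ℝ) 1 ∧
        ∀ i, M ≤ i →
        ((bdigit b x (i+1) + bdigit b z (i+1)) % b
          + (b - (bdigit b x 0 + bdigit b z 0) % b)) % b = b - 1} := by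
    rintro z ⟨hz, M, hM⟩
    exact Set.mem_iUnion.2 ⟨M, hz, hM⟩
  apply Set.Countable.mono this
  apply Set.countable_iUnion
  intro M
  apply countable_of_tail_determined hb (M + 2) (fun z hz => hz.1)
  rintro z ⟨hzI, hz⟩ w ⟨hwI, hw⟩ hjM j
  by_cases hj : j < M + 2
  · exact hjM j hj
  · push_neg at hj
    obtain ⟨i, rfl⟩ : ∃ i, j = i + 1 := ⟨j - 1, by omega⟩
    have hiM : M ≤ i := by omega
    have h0 : bdigit b z 0 = bdigit b w 0 := hjM 0 (by omega)
    have hz' := hz i hiM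
    have hw' := hw i hiM
    rw [h0] at hz'
    have hmlt : ∀ u v : ℕ, (u + v) % b < b := fun u v => Nat.mod_lt _ (by omega)
    have := mod_cancel_right hb (hmlt _ _) (hmlt _ _) (hz'.trans hw'.symm)
    exact mod_cancel_left hb (bdigit_lt hb z (i+1)) (bdigit_lt hb w (i+1)) this

end TA

open TA

/-- **Lemma (countability of the exceptional shift set, one dimension).**
Let `b ≥ 2`, `N ∈ ℕ` and `x, x' ∈ [0,1]` with `v(x,x') ≥ N + 1` (the first `N+1` `b`-adic
digits agree). Then `T = {z ∈ [0,1] : v(φ_b(x ⊕ z), φ_b(x' ⊕ z)) < N}` is countable. -/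
theorem tent_shift_countable (b : ℕ) (hb : 2 ≤ b) (N : ℕ) (x x' : ℝ)
    (hx : x ∈ Set.Icc (0 : ℝ) 1) (hx' : x' ∈ Set.Icc (0 : ℝ) 1)
    (hv : ∀ i < N + 1, bdigit b x i = bdigit b x' i) :
    Set.Countable {z : ℝ | z ∈ Set.Icc (0 : ℝ) 1 ∧ ∃ i < N,
        bdigit b (btent b (badd b x z)) i ≠ bdigit b (btent b (badd b x' z)) i} := by
  have hb0 : 0 < b := by omega
  set Ea := {z : ℝ | z ∈ Set.Icc (0:ℝ) 1 ∧
      ∃ M, ∀ i, M ≤ i → (bdigit b x i + bdigit b z i) % b = b - 1} with hEa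
  set Ea' := {z : ℝ | z ∈ Set.Icc (0:ℝ) 1 ∧
      ∃ M, ∀ i, M ≤ i → (bdigit b x' i + bdigit b z i) % b = b - 1} with hEa'
  set Et := {z : ℝ | z ∈ Set.Icc (0:ℝ) 1 ∧
      ∃ M, ∀ i, M ≤ i →
        ((bdigit b x (i+1) + bdigit b z (i+1)) % b
          + (b - (bdigit b x 0 + bdigit b z 0) % b)) % b = b - 1} with hEt
  set Et' := {z : ℝ | z ∈ Set.Icc (0:ℝ) 1 ∧
      ∃ M, ∀ i, M ≤ i →
        ((bdigit b x' (i+1) + bdigit b z (i+1)) % b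
          + (b - (bdigit b x' 0 + bdigit b z 0) % b)) % b = b - 1} with hEt'
  have hcnt : (Ea ∪ Ea' ∪ Et ∪ Et').Countable :=
    (((countA hb x).union (countA hb x')).union (countT hb x)).union (countT hb x')
  apply Set.Countable.mono ?_ hcnt
  rintro z ⟨hzI, i0, hi0N, hneq⟩
  by_contra hnot
  simp only [Set.mem_union, not_or] at hnot
  obtain ⟨⟨⟨hnEa, hnEa'⟩, hnEt⟩, hnEt'⟩ := hnot
  -- extract the "not eventually b-1" statements
  have hneA : ∀ n, ∃ m, n ≤ m ∧ (bdigit b x m + bdigit b z m) % b ≠ b - 1 := by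
    intro n
    have h := hnEa
    rw [hEa] at h
    simp only [Set.mem_setOf_eq] at h
    push_neg at h
    exact h hzI n
  have hneA' : ∀ n, ∃ m, n ≤ m ∧ (bdigit b x' m + bdigit b z m) % b ≠ b - 1 := by
    intro n
    have h := hnEa'
    rw [hEa'] at h
    simp only [Set.mem_setOf_eq] at h
    push_neg at h
    exact h hzI n
  have hneT : ∀ n, ∃ m, n ≤ m ∧
      ((bdigit b x (m+1) + bdigit b z (m+1)) % b
        + (b - (bdigit b x 0 + bdigit b z 0) % b)) % b ≠ b - 1 := by
    intro n
    have h := hnEt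
    rw [hEt] at h
    simp only [Set.mem_setOf_eq] at h
    push_neg at h
    exact h hzI n
  have hneT' : ∀ n, ∃ m, n ≤ m ∧
      ((bdigit b x' (m+1) + bdigit b z (m+1)) % b
        + (b - (bdigit b x' 0 + bdigit b z 0) % b)) % b ≠ b - 1 := by
    intro n
    have h := hnEt'
    rw [hEt'] at h
    simp only [Set.mem_setOf_eq] at h
    push_neg at h
    exact h hzI n
  -- digit sequences
  set a : ℕ → ℕ := fun i => (bdigit b x i + bdigit b z i) % b with ha
  set a' : ℕ → ℕ := fun i => (bdigit b x' i + bdigit b z i) % b with ha'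
  have hlta : ∀ i, a i < b := fun i => Nat.mod_lt _ hb0
  have hlta' : ∀ i, a' i < b := fun i => Nat.mod_lt _ hb0
  have hba : ∀ i, bdigit b (badd b x z) i = a i := fun i =>
    bdigit_val hb hlta hneA i
  have hba' : ∀ i, bdigit b (badd b x' z) i = a' i := fun i =>
    bdigit_val hb hlta' hneA' i
  set t : ℕ → ℕ := fun i => (a (i+1) + (b - a 0)) % b with ht
  set t' : ℕ → ℕ := fun i => (a' (i+1) + (b - a' 0)) % b with ht'
  have hltt : ∀ i, t i < b := fun i => Nat.mod_lt _ hb0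
  have hltt' : ∀ i, t' i < b := fun i => Nat.mod_lt _ hb0
  have htenv : btent b (badd b x z) = ∑' i, ((t i : ℕ) : ℝ) / (b:ℝ)^(i+1) := by
    unfold btent
    exact tsum_congr fun i => by rw [hba (i+1), hba 0]
  have htenv' : btent b (badd b x' z) = ∑' i, ((t' i : ℕ) : ℝ) / (b:ℝ)^(i+1) := by
    unfold btent
    exact tsum_congr fun i => by rw [hba' (i+1), hba' 0]
  have hbt : ∀ i, bdigit b (btent b (badd b x z)) i = t i := fun i => by
    rw [htenv]; exact bdigit_val hb hltt hneT i
  have hbt' : ∀ i, bdigit b (btent b (badd b x' z)) i = t' i := fun i => by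
    rw [htenv']; exact bdigit_val hb hltt' hneT' i
  apply hneq
  rw [hbt i0, hbt' i0]
  simp only [ht, ht', ha, ha']
  rw [hv (i0+1) (by omega), hv 0 (by omega)]
end
end
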